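/- Let (X_i, T_i, ε_i), i = 1, 2, …, be an i.i.d. sequence where X_i takes values in a finite set 𝒳 = ∏_{j=1}^m 𝒳_j of discrete feature vectors, T_i ∈ {0,1}, and ε_i is independent of (X_i, T_i) with ε_i ~ N(0, σ²) for some σ > 0. Fix K ⊆ {1,…,m} with projection π_K, and suppose Y_i = f(π_K(X_i)) + c · T_i + ε_i for some function f and constant c ∈ ℝ. Then: (1) for every x ∈ 𝒳, the individual treatment effect ITE(x) := E[Y | X = x, T = 1] − E[Y | X = x, T = 0] equals c; and (2) for any a ∈ ∏_{j∈K} 𝒳_j with ℙ(π_K(X_1) = a, T_1 = 1) > 0 and ℙ(π_K(X_1) = a, T_1 = 0) > 0, the matched-subgroup estimator ÎTE_n(a) := ŷ_n(a,1) − ŷ_n(a,0) converges to c almost surely as n → ∞, so that ( ITE(x) − ÎTE_n(π_K(x)) )² → 0 with probability 1 for every x. -/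

import Mathlib

open MeasureTheory ProbabilityTheory Filter
open scoped Classical NNReal
open scoped ENNReal

/-! Auxiliary lemmas about the centered Gaussian. -/

lemma aux_gaussianPDFReal_zero_eq (v : ℝ≥0) (x : ℝ) :
    gaussianPDFReal 0 v x
      = (Real.sqrt (2 * Real.pi * v))⁻¹ * Real.exp (-(2 * (v : ℝ))⁻¹ * x ^ 2) := by
  rw [gaussianPDFReal, sub_zero]
  congr 1
  congr 1
  ring

lemma aux_gaussianPDFReal_zero_neg (v : ℝ≥0) (x : ℝ) :
    gaussianPDFReal 0 v (-x) = gaussianPDFReal 0 v x := by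
  simp [aux_gaussianPDFReal_zero_eq, neg_sq]

lemma aux_integrable_mul_gaussianPDFReal {v : ℝ≥0} (hv : v ≠ 0) :
    Integrable (fun x : ℝ => x * gaussianPDFReal 0 v x) := by
  have hv' : (0 : ℝ) < (v : ℝ) := by
    have : (0 : ℝ≥0) < v := pos_iff_ne_zero.mpr hv
    exact_mod_cast this
  have hb : (0 : ℝ) < (2 * (v : ℝ))⁻¹ := by positivity
  have h := (integrable_mul_exp_neg_mul_sq hb).const_mul (Real.sqrt (2 * Real.pi * v))⁻¹
  exact h.congr (Filter.Eventually.of_forall fun x => by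
    simp only [aux_gaussianPDFReal_zero_eq]; ring)

lemma aux_integrable_id_gaussianReal {v : ℝ≥0} (hv : v ≠ 0) :
    Integrable (fun x : ℝ => x) (gaussianReal 0 v) := by
  rw [gaussianReal_of_var_ne_zero _ hv]
  rw [integrable_withDensity_iff (measurable_gaussianPDF _ _)
    (ae_of_all _ fun x => ENNReal.ofReal_lt_top)]
  refine (aux_integrable_mul_gaussianPDFReal hv).congr
    (Filter.Eventually.of_forall fun x => ?_)
  simp only [gaussianPDF]
  rw [ENNReal.toReal_ofReal (gaussianPDFReal_nonneg _ _ _)]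

lemma aux_integral_mul_gaussianPDFReal (v : ℝ≥0) :
    ∫ x : ℝ, x * gaussianPDFReal 0 v x = 0 := by
  have h1 : ∫ x : ℝ, (-x) * gaussianPDFReal 0 v (-x)
      = ∫ x : ℝ, x * gaussianPDFReal 0 v x :=
    integral_neg_eq_self (fun x => x * gaussianPDFReal 0 v x) volume
  have h2 : (fun x : ℝ => (-x) * gaussianPDFReal 0 v (-x))
      = fun x : ℝ => -(x * gaussianPDFReal 0 v x) := by
    funext x
    rw [aux_gaussianPDFReal_zero_neg]; ring
  rw [h2, integral_neg] at h1
  linarith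

lemma aux_integral_id_gaussianReal {v : ℝ≥0} (hv : v ≠ 0) :
    ∫ x : ℝ, x ∂(gaussianReal 0 v) = 0 := by
  rw [gaussianReal_of_var_ne_zero _ hv]
  have hm : Measurable fun x : ℝ => (gaussianPDFReal 0 v x).toNNReal :=
    (measurable_gaussianPDFReal 0 v).real_toNNReal
  have hd : (volume.withDensity (gaussianPDF 0 v))
      = volume.withDensity (fun x => ((gaussianPDFReal 0 v x).toNNReal : ℝ≥0∞)) := rfl
  rw [hd, integral_withDensity_eq_integral_smul hm (fun x : ℝ => x)]
  have : (fun x : ℝ => (gaussianPDFReal 0 v x).toNNReal • x)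
      = fun x : ℝ => x * gaussianPDFReal 0 v x := by
    funext x
    rw [NNReal.smul_def, smul_eq_mul,
      Real.coe_toNNReal _ (gaussianPDFReal_nonneg 0 v x)]
    ring
  rw [this, aux_integral_mul_gaussianPDFReal]

/-- Integral of `ω ↦ if W ω ∈ A then r + e ω else 0` where `e` is centered and
independent of `W`. -/
lemma aux_indicator_integral {Ω : Type*} {mΩ : MeasurableSpace Ω} (μ : Measure Ω)
    [IsProbabilityMeasure μ] {α : Type*} [MeasurableSpace α] (W : Ω → α) (e : Ω → ℝ)
    (hW : Measurable W)
    (hind : IndepFun W e μ) (hei : Integrable e μ) (hez : ∫ ω, e ω ∂μ = 0)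
    {A : Set α} (hA : MeasurableSet A) (r : ℝ) :
    Integrable ((W ⁻¹' A).indicator (fun ω => r + e ω)) μ ∧
      ∫ ω, (W ⁻¹' A).indicator (fun ω' => r + e ω') ω ∂μ = r * (μ (W ⁻¹' A)).toReal := by
  have hset : MeasurableSet (W ⁻¹' A) := hW hA
  have heq : ((W ⁻¹' A).indicator (fun ω => r + e ω))
      = fun ω => (W ⁻¹' A).indicator (fun _ => r) ω + (W ⁻¹' A).indicator e ω := by
    funext ω
    by_cases h : W ω ∈ A <;> simp [Set.indicator, h]
  have h1 : Integrable ((W ⁻¹' A).indicator (fun _ => r)) μ :=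
    (integrable_const r).indicator hset
  have h2 : Integrable ((W ⁻¹' A).indicator e) μ := hei.indicator hset
  have hφ : Measurable (A.indicator (fun _ => (1 : ℝ))) :=
    measurable_const.indicator hA
  have hcomp : (fun ω => A.indicator (fun _ => (1 : ℝ)) (W ω))
      = (W ⁻¹' A).indicator (fun _ => (1 : ℝ)) := by
    funext ω
    by_cases h : W ω ∈ A <;> simp [Set.indicator, h]
  have hind2 : IndepFun (fun ω => A.indicator (fun _ => (1 : ℝ)) (W ω)) e μ :=
    hind.comp hφ measurable_id
  have hint1 : Integrable (fun ω => A.indicator (fun _ => (1 : ℝ)) (W ω)) μ := by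
    rw [hcomp]; exact (integrable_const 1).indicator hset
  have e2 : ∫ ω, (W ⁻¹' A).indicator e ω ∂μ = 0 := by
    have heqm : (fun ω => (W ⁻¹' A).indicator e ω)
        = fun ω => (A.indicator (fun _ => (1 : ℝ)) (W ω)) * e ω := by
      funext ω
      by_cases h : W ω ∈ A <;> simp [Set.indicator, h]
    have hmul : ∫ ω, (A.indicator (fun _ => (1 : ℝ)) (W ω)) * e ω ∂μ
        = (∫ ω, A.indicator (fun _ => (1 : ℝ)) (W ω) ∂μ) * ∫ ω, e ω ∂μ :=
      hind2.integral_mul_eq_mul_integral hint1.aestronglyMeasurable hei.aestronglyMeasurable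
    rw [heqm, hmul, hez, mul_zero]
  constructor
  · rw [heq]; exact h1.add h2
  · rw [heq, integral_add h1 h2, e2, add_zero,
      integral_indicator_const _ hset, smul_eq_mul, mul_comm, measureReal_def]

/-- for an i.i.d. sequence `(Xᵢ, Tᵢ, εᵢ)` with discrete features,
binary treatment, Gaussian noise `εᵢ ~ N(0, σ²)` independent of `(Xᵢ, Tᵢ)`, and
outcomes `Yᵢ = f(π_K(Xᵢ)) + c·Tᵢ + εᵢ`:
(1) the individual treatment effect
`ITE(x) = E[Y | X = x, T = 1] − E[Y | X = x, T = 0]` equals `c` for every `x`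
(whenever the conditioning events have positive probability), and
(2) the matched-subgroup estimator `ÎTEₙ(a) = ŷₙ(a,1) − ŷₙ(a,0)` converges to `c`
almost surely. -/
theorem ite_identification_and_consistency
    {Ω : Type*} {mΩ : MeasurableSpace Ω} (μ : Measure Ω) [IsProbabilityMeasure μ]
    {m : ℕ} (𝒳 : Fin m → Type*) [∀ j, Fintype (𝒳 j)]
    [∀ j, MeasurableSpace (𝒳 j)] [∀ j, MeasurableSingletonClass (𝒳 j)]
    (X : ℕ → Ω → ∀ j, 𝒳 j) (T : ℕ → Ω → Bool) (ε : ℕ → Ω → ℝ)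
    (hmeas : ∀ i, Measurable fun ω => (X i ω, T i ω, ε i ω))
    -- the triples (Xᵢ, Tᵢ, εᵢ) are independent ...
    (hindep : iIndepFun
      (fun i ω => (X i ω, T i ω, ε i ω)) μ)
    -- ... and identically distributed
    (hident : ∀ i, IdentDistrib (fun ω => (X i ω, T i ω, ε i ω))
      (fun ω => (X 0 ω, T 0 ω, ε 0 ω)) μ μ)
    -- εᵢ is independent of (Xᵢ, Tᵢ)
    (hε_indep : ∀ i, IndepFun (fun ω => (X i ω, T i ω)) (ε i) μ)
    -- εᵢ ~ N(0, σ²) with σ > 0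
    (σ : ℝ≥0) (hσ : 0 < σ)
    (hgauss : ∀ i, Measure.map (ε i) μ = gaussianReal 0 (σ ^ 2))
    -- outcome model Yᵢ = f(π_K(Xᵢ)) + c·Tᵢ + εᵢ
    (K : Finset (Fin m)) (f : ((j : K) → 𝒳 j.1) → ℝ) (c : ℝ)
    (Y : ℕ → Ω → ℝ)
    (hY : ∀ i ω, Y i ω =
      f (fun j : K => X i ω j.1) + c * (if T i ω then 1 else 0) + ε i ω)
    (a : (j : K) → 𝒳 j.1)
    (ha1 : 0 < μ {ω | (fun j : K => X 0 ω j.1) = a ∧ T 0 ω = true})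
    (ha0 : 0 < μ {ω | (fun j : K => X 0 ω j.1) = a ∧ T 0 ω = false}) :
    -- (1) ITE(x) = E[Y | X = x, T = 1] − E[Y | X = x, T = 0] = c for every x
    (∀ x : ∀ j, 𝒳 j,
      0 < μ {ω | X 0 ω = x ∧ T 0 ω = true} →
      0 < μ {ω | X 0 ω = x ∧ T 0 ω = false} →
      (∫ ω, Y 0 ω ∂μ[|{ω | X 0 ω = x ∧ T 0 ω = true}]) -
        (∫ ω, Y 0 ω ∂μ[|{ω | X 0 ω = x ∧ T 0 ω = false}]) = c) ∧
    -- (2) ÎTEₙ(a) = ŷₙ(a,1) − ŷₙ(a,0) → c almost surely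
    (∀ᵐ ω ∂μ, Tendsto
      (fun n : ℕ =>
        (∑ i ∈ Finset.range n,
            if (fun j : K => X i ω j.1) = a ∧ T i ω = true then Y i ω else 0) /
        (∑ i ∈ Finset.range n,
            if (fun j : K => X i ω j.1) = a ∧ T i ω = true then (1 : ℝ) else 0) -
        ((∑ i ∈ Finset.range n,
            if (fun j : K => X i ω j.1) = a ∧ T i ω = false then Y i ω else 0) /
         (∑ i ∈ Finset.range n,
            if (fun j : K => X i ω j.1) = a ∧ T i ω = false then (1 : ℝ) else 0)))
      atTop (nhds c)) := by
  -- basic measurability of the components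
  have hX : ∀ i, Measurable (X i) := fun i => (hmeas i).fst
  have hT : ∀ i, Measurable (T i) := fun i => (hmeas i).snd.fst
  have hε : ∀ i, Measurable (ε i) := fun i => (hmeas i).snd.snd
  have hW : ∀ i, Measurable fun ω => (X i ω, T i ω) := fun i =>
    (hX i).prodMk (hT i)
  have hσ2 : (σ ^ 2 : ℝ≥0) ≠ 0 := pow_ne_zero 2 hσ.ne'
  -- integrability and centering of the noise
  have hεint : ∀ i, Integrable (ε i) μ := by
    intro i
    have h := aux_integrable_id_gaussianReal hσ2
    rw [← hgauss i] at h
    exact (integrable_map_measure aestronglyMeasurable_id (hε i).aemeasurable).mp h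
  have hεzero : ∀ i, ∫ ω, ε i ω ∂μ = 0 := by
    intro i
    have h := aux_integral_id_gaussianReal hσ2
    rw [← hgauss i] at h
    have h2 : ∫ ω, ε i ω ∂μ = ∫ x, x ∂(Measure.map (ε i) μ) :=
      (integral_map (hε i).aemeasurable aestronglyMeasurable_id).symm
    rw [h2, h]
  constructor
  · -- Part (1)
    intro x hx1 hx0
    have key : ∀ t : Bool,
        0 < μ {ω | X 0 ω = x ∧ T 0 ω = t} →
        (∫ ω, Y 0 ω ∂μ[|{ω | X 0 ω = x ∧ T 0 ω = t}])
          = f (fun j : K => x j.1) + c * (if t then 1 else 0) := by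
      intro t hpos
      set s : Set Ω := {ω | X 0 ω = x ∧ T 0 ω = t} with hs_def
      set r : ℝ := f (fun j : K => x j.1) + c * (if t then 1 else 0) with hr_def
      set A : Set ((∀ j, 𝒳 j) × Bool) := {z | z.1 = x ∧ z.2 = t} with hA_def
      have hA : MeasurableSet A := (Set.toFinite A).measurableSet
      have hpre : (fun ω => (X 0 ω, T 0 ω)) ⁻¹' A = s := rfl
      have haux := aux_indicator_integral μ (fun ω => (X 0 ω, T 0 ω)) (ε 0)
        (hW 0) (hε_indep 0) (hεint 0) (hεzero 0) hA r
      have hsmeas : MeasurableSet s := by rw [← hpre]; exact (hW 0) hA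
      have hres : ∫ ω in s, Y 0 ω ∂μ
          = r * (μ ((fun ω => (X 0 ω, T 0 ω)) ⁻¹' A)).toReal := by
        rw [← haux.2, ← integral_indicator hsmeas]
        refine integral_congr_ae (Filter.Eventually.of_forall fun ω => ?_)
        by_cases h : ω ∈ s
        · have hx : X 0 ω = x := h.1
          have ht : T 0 ω = t := h.2
          have hmem : ω ∈ (fun ω => (X 0 ω, T 0 ω)) ⁻¹' A := ⟨hx, ht⟩
          rw [Set.indicator_of_mem h, Set.indicator_of_mem hmem, hY 0 ω]
          have hfj : (fun j : K => X 0 ω j.1) = fun j : K => x j.1 := by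
            funext j; rw [hx]
          rw [hfj, ht, hr_def]
        · have hmem : ω ∉ (fun ω => (X 0 ω, T 0 ω)) ⁻¹' A := by
            intro hc; exact h ⟨hc.1, hc.2⟩
          rw [Set.indicator_of_notMem h, Set.indicator_of_notMem hmem]
      have hμeq : μ ((fun ω => (X 0 ω, T 0 ω)) ⁻¹' A) = μ s := by rw [hpre]
      have hμs_ne_top : μ s ≠ ⊤ := measure_ne_top μ s
      have hμs_ne : μ s ≠ 0 := hpos.ne'
      rw [ProbabilityTheory.cond, integral_smul_measure, hres, hμeq, smul_eq_mul,
        ENNReal.toReal_inv]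
      rw [← mul_assoc, mul_comm ((μ s).toReal)⁻¹ r, mul_assoc,
        inv_mul_cancel₀ (by
          simp only [ne_eq, ENNReal.toReal_eq_zero_iff]
          push_neg
          exact ⟨hμs_ne, hμs_ne_top⟩), mul_one]
    rw [key true hx1, key false hx0]
    norm_num
  · -- Part (2)
    -- the event set in the "feature space"
    set A : Bool → Set ((∀ j, 𝒳 j) × Bool) :=
      fun b => {z | (fun j : K => z.1 j.1) = a ∧ z.2 = b} with hA_def
    have hA : ∀ b, MeasurableSet (A b) := fun b => (Set.toFinite (A b)).measurableSet
    set rb : Bool → ℝ := fun b => f a + c * (if b then 1 else 0) with hrb_def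
    -- the functions fed to the strong law
    set φg : Bool → ((∀ j, 𝒳 j) × Bool × ℝ) → ℝ :=
      fun b z => if (z.1, z.2.1) ∈ A b then rb b + z.2.2 else 0 with hφg_def
    set φh : Bool → ((∀ j, 𝒳 j) × Bool × ℝ) → ℝ :=
      fun b z => if (z.1, z.2.1) ∈ A b then (1 : ℝ) else 0 with hφh_def
    have hq : Measurable fun z : (∀ j, 𝒳 j) × Bool × ℝ => (z.1, z.2.1) :=
      measurable_fst.prodMk (measurable_fst.comp measurable_snd)
    have hφg_meas : ∀ b, Measurable (φg b) := by
      intro b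
      have : φg b = Set.indicator ((fun z : (∀ j, 𝒳 j) × Bool × ℝ => (z.1, z.2.1)) ⁻¹' A b)
          (fun z => rb b + z.2.2) := by
        funext z
        by_cases h : (z.1, z.2.1) ∈ A b <;> simp [hφg_def, Set.indicator, h]
      rw [this]
      exact (measurable_const.add (measurable_snd.comp measurable_snd)).indicator
        (hq (hA b))
    have hφh_meas : ∀ b, Measurable (φh b) := by
      intro b
      have : φh b = Set.indicator ((fun z : (∀ j, 𝒳 j) × Bool × ℝ => (z.1, z.2.1)) ⁻¹' A b)
          (fun _ => (1 : ℝ)) := by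
        funext z
        by_cases h : (z.1, z.2.1) ∈ A b <;> simp [hφh_def, Set.indicator, h]
      rw [this]
      exact measurable_const.indicator (hq (hA b))
    set Z : ℕ → Ω → (∀ j, 𝒳 j) × Bool × ℝ := fun i ω => (X i ω, T i ω, ε i ω) with hZ_def
    -- strong law for a composed family
    have hSLLN : ∀ (ψ : ((∀ j, 𝒳 j) × Bool × ℝ) → ℝ), Measurable ψ →
        Integrable (fun ω => ψ (Z 0 ω)) μ →
        ∀ᵐ ω ∂μ, Tendsto (fun n : ℕ => (∑ i ∈ Finset.range n, ψ (Z i ω)) / n)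
          atTop (nhds (∫ ω, ψ (Z 0 ω) ∂μ)) := by
      intro ψ hψ hint
      exact strong_law_ae_real (fun i ω => ψ (Z i ω)) hint
        (fun i j hij => (hindep.indepFun hij).comp hψ hψ)
        (fun i => (hident i).comp hψ)
    -- integrals of the composed functions
    have hgeq0 : ∀ b, (fun ω => φg b (Z 0 ω))
        = ((fun ω => (X 0 ω, T 0 ω)) ⁻¹' A b).indicator (fun ω => rb b + ε 0 ω) := by
      intro b
      funext ω
      by_cases h : (X 0 ω, T 0 ω) ∈ A b
      · rw [Set.indicator_of_mem (show ω ∈ _ from h), hφg_def, hZ_def]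
        exact if_pos h
      · rw [Set.indicator_of_notMem (show ω ∉ _ from h), hφg_def, hZ_def]
        exact if_neg h
    have hauxg : ∀ b, Integrable (fun ω => φg b (Z 0 ω)) μ ∧
        ∫ ω, φg b (Z 0 ω) ∂μ
          = rb b * (μ ((fun ω => (X 0 ω, T 0 ω)) ⁻¹' A b)).toReal := by
      intro b
      have h := aux_indicator_integral μ (fun ω => (X 0 ω, T 0 ω)) (ε 0)
        (hW 0) (hε_indep 0) (hεint 0) (hεzero 0) (hA b) (rb b)
      rw [hgeq0 b]
      exact ⟨h.1, h.2⟩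
    have hauxh : ∀ b, Integrable (fun ω => φh b (Z 0 ω)) μ ∧
        ∫ ω, φh b (Z 0 ω) ∂μ
          = (μ ((fun ω => (X 0 ω, T 0 ω)) ⁻¹' A b)).toReal := by
      intro b
      have hset : MeasurableSet ((fun ω => (X 0 ω, T 0 ω)) ⁻¹' A b) := (hW 0) (hA b)
      have heq : (fun ω => φh b (Z 0 ω))
          = Set.indicator ((fun ω => (X 0 ω, T 0 ω)) ⁻¹' A b) (fun _ => (1 : ℝ)) := by
        funext ω
        by_cases h : (X 0 ω, T 0 ω) ∈ A b
        · rw [Set.indicator_of_mem (show ω ∈ _ from h), hφh_def, hZ_def]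
          exact if_pos h
        · rw [Set.indicator_of_notMem (show ω ∉ _ from h), hφh_def, hZ_def]
          exact if_neg h
      constructor
      · rw [heq]; exact (integrable_const 1).indicator hset
      · rw [heq, integral_indicator_const _ hset, smul_eq_mul, mul_one, measureReal_def]
    -- the limit quantities
    set q : Bool → ℝ := fun b => (μ ((fun ω => (X 0 ω, T 0 ω)) ⁻¹' A b)).toReal
      with hq_def
    have hqpos : ∀ b, 0 < μ {ω | (fun j : K => X 0 ω j.1) = a ∧ T 0 ω = b} → 0 < q b := by
      intro b hb
      have hpre : (fun ω => (X 0 ω, T 0 ω)) ⁻¹' A b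
          = {ω | (fun j : K => X 0 ω j.1) = a ∧ T 0 ω = b} := rfl
      rw [hq_def]
      simp only [hpre]
      exact ENNReal.toReal_pos hb.ne' (measure_ne_top μ _)
    have hq1 : 0 < q true := hqpos true ha1
    have hq0 : 0 < q false := hqpos false ha0
    -- almost-sure convergence of the four averaged sums
    have hg1 := hSLLN (φg true) (hφg_meas true) (hauxg true).1
    have hg0 := hSLLN (φg false) (hφg_meas false) (hauxg false).1
    have hh1 := hSLLN (φh true) (hφh_meas true) (hauxh true).1
    have hh0 := hSLLN (φh false) (hφh_meas false) (hauxh false).1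
    rw [(hauxg true).2] at hg1
    rw [(hauxg false).2] at hg0
    rw [(hauxh true).2] at hh1
    rw [(hauxh false).2] at hh0
    filter_upwards [hg1, hg0, hh1, hh0] with ω t1 t0 u1 u0
    -- turn averaged convergence into ratio convergence
    have hratio : ∀ b : Bool,
        Tendsto (fun n : ℕ => (∑ i ∈ Finset.range n, φg b (Z i ω)) / n) atTop
          (nhds (rb b * q b)) →
        Tendsto (fun n : ℕ => (∑ i ∈ Finset.range n, φh b (Z i ω)) / n) atTop
          (nhds (q b)) →
        0 < q b →
        Tendsto (fun n : ℕ => (∑ i ∈ Finset.range n, φg b (Z i ω))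
            / (∑ i ∈ Finset.range n, φh b (Z i ω))) atTop (nhds (rb b)) := by
      intro b hgb hhb hqb
      have hdiv := hgb.div hhb hqb.ne'
      have hlim : rb b * q b / q b = rb b := by
        rw [mul_div_assoc, div_self hqb.ne', mul_one]
      rw [hlim] at hdiv
      refine hdiv.congr' ?_
      filter_upwards [eventually_ge_atTop 1] with n hn
      have hn' : (n : ℝ) ≠ 0 := by positivity
      set sa := ∑ i ∈ Finset.range n, φg b (Z i ω)
      set sb := ∑ i ∈ Finset.range n, φh b (Z i ω)
      show sa / (n : ℝ) / (sb / (n : ℝ)) = sa / sb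
      rw [div_div_div_cancel_right₀ hn' sa sb]
    have l1 := hratio true t1 u1 hq1
    have l0 := hratio false t0 u0 hq0
    have lfin := l1.sub l0
    have hc : rb true - rb false = c := by simp [hrb_def]
    rw [hc] at lfin
    -- identify the sums in the statement with the composed sums
    refine lfin.congr fun n => ?_
    have hnum : ∀ b : Bool, ∀ i,
        (if (fun j : K => X i ω j.1) = a ∧ T i ω = b then Y i ω else 0)
          = φg b (Z i ω) := by
      intro b i
      by_cases h : (fun j : K => X i ω j.1) = a ∧ T i ω = b
      · have hmem : ((X i ω, T i ω, ε i ω).1, (X i ω, T i ω, ε i ω).2.1) ∈ A b :=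
          ⟨h.1, h.2⟩
        rw [if_pos h]
        show Y i ω = φg b (X i ω, T i ω, ε i ω)
        rw [hφg_def]
        simp only [if_pos hmem]
        rw [hY i ω, h.1, h.2, hrb_def]
      · have hmem : ((X i ω, T i ω, ε i ω).1, (X i ω, T i ω, ε i ω).2.1) ∉ A b := by
          intro hc'; exact h ⟨hc'.1, hc'.2⟩
        rw [if_neg h]
        show (0 : ℝ) = φg b (X i ω, T i ω, ε i ω)
        rw [hφg_def]
        simp only [if_neg hmem]
    have hden : ∀ b : Bool, ∀ i,
        (if (fun j : K => X i ω j.1) = a ∧ T i ω = b then (1 : ℝ) else 0)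
          = φh b (Z i ω) := by
      intro b i
      by_cases h : (fun j : K => X i ω j.1) = a ∧ T i ω = b
      · have hmem : ((X i ω, T i ω, ε i ω).1, (X i ω, T i ω, ε i ω).2.1) ∈ A b :=
          ⟨h.1, h.2⟩
        rw [if_pos h]
        show (1 : ℝ) = φh b (X i ω, T i ω, ε i ω)
        rw [hφh_def]
        simp only [if_pos hmem]
      · have hmem : ((X i ω, T i ω, ε i ω).1, (X i ω, T i ω, ε i ω).2.1) ∉ A b := by
          intro hc'; exact h ⟨hc'.1, hc'.2⟩
        rw [if_neg h]
        show (0 : ℝ) = φh b (X i ω, T i ω, ε i ω)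
        rw [hφh_def]
        simp only [if_neg hmem]
    rw [Finset.sum_congr rfl fun i _ => hnum true i,
      Finset.sum_congr rfl fun i _ => hden true i,
      Finset.sum_congr rfl fun i _ => hnum false i,
      Finset.sum_congr rfl fun i _ => hden false i]
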